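/- Let T be a tree with at least 3 leaves. If a, b, c ∈ V(T) form a triametral triple, i.e. d_T(a,b) + d_T(a,c) + d_T(b,c) = tr(T), then each of a, b, c is a leaf of T. -/

import Mathlib

open SimpleGraph Finset

section TriTreeAux

variable {V : Type*} {T : SimpleGraph V}

/-- In a tree, every path has length equal to the distance between its endpoints. -/
private lemma tt_path_length_eq_dist (hT : T.IsTree) {u v : V} (p : T.Walk u v)
    (hp : p.IsPath) : p.length = T.dist u v := by
  obtain ⟨q, hq, hql⟩ := hT.isConnected.exists_path_of_dist u v
  have h := hT.IsAcyclic.path_unique ⟨p, hp⟩ ⟨q, hq⟩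
  rw [← hql]
  exact congrArg (fun r : T.Path u v => r.1.length) h

/-- A vertex on a geodesic splits the distance. -/
private lemma tt_dist_split (hconn : T.Connected) {u v w : V} (p : T.Walk u v)
    (hl : p.length = T.dist u v) (hw : w ∈ p.support) :
    T.dist u w + T.dist w v = T.dist u v := by
  classical
  have h1 : T.dist u w ≤ (p.takeUntil w hw).length := SimpleGraph.dist_le _
  have h2 : T.dist w v ≤ (p.dropUntil w hw).length := SimpleGraph.dist_le _
  have h3 : (p.takeUntil w hw).length + (p.dropUntil w hw).length = p.length := by
    rw [← SimpleGraph.Walk.length_append, SimpleGraph.Walk.take_spec]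
  have h4 := hconn.dist_triangle (u := u) (v := w) (w := v)
  omega

/-- Existence of a "gate": a neighbour strictly closer to the target. -/
private lemma tt_gate_exists (hconn : T.Connected) {a b : V} (hab : a ≠ b) :
    ∃ y, T.Adj a y ∧ T.dist y b + 1 = T.dist a b := by
  obtain ⟨p, hp, hlen⟩ := hconn.exists_path_of_dist a b
  cases p with
  | nil => exact absurd rfl hab
  | cons h q =>
    rename_i y
    refine ⟨y, h, ?_⟩
    have h1 : T.dist y b ≤ q.length := SimpleGraph.dist_le q
    have h2 : T.dist a y ≤ 1 := by
      simpa using SimpleGraph.dist_le (SimpleGraph.Walk.cons h SimpleGraph.Walk.nil)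
    have h3 := hconn.dist_triangle (u := a) (v := y) (w := b)
    have h4 : q.length + 1 = T.dist a b := by
      simpa [SimpleGraph.Walk.length_cons] using hlen
    omega

/-- In a tree, adjacent vertices have distances to any vertex differing exactly by one. -/
private lemma tt_adj_dist_succ (hT : T.IsTree) {x y b : V} (hxy : T.Adj x y)
    (hle : T.dist x b ≤ T.dist y b) : T.dist y b = T.dist x b + 1 := by
  have hconn := hT.isConnected
  have hub : T.dist y b ≤ T.dist x b + 1 := by
    have h1 : T.dist y x ≤ 1 := by
      simpa using SimpleGraph.dist_le (SimpleGraph.Walk.cons hxy.symm SimpleGraph.Walk.nil)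
    have h2 := hconn.dist_triangle (u := y) (v := x) (w := b)
    omega
  rcases Nat.lt_or_ge (T.dist x b) (T.dist y b) with h | h
  · omega
  · exfalso
    have heq : T.dist y b = T.dist x b := le_antisymm h hle
    have hxb : x ≠ b := by
      rintro rfl
      rw [SimpleGraph.dist_self] at heq
      exact hxy.ne' (hconn.dist_eq_zero_iff.mp heq)
    obtain ⟨p, hp, hlen⟩ := hconn.exists_path_of_dist x b
    have hy : y ∉ p.support := by
      intro hy
      have hsp := tt_dist_split hconn p hlen hy
      have hxy1 : 0 < T.dist x y := hconn.pos_dist_of_ne hxy.ne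
      have h1 : T.dist y x ≤ 1 := by
        simpa using SimpleGraph.dist_le (SimpleGraph.Walk.cons hxy.symm SimpleGraph.Walk.nil)
      have hcomm : T.dist x y = T.dist y x := SimpleGraph.dist_comm
      omega
    have hcons : (SimpleGraph.Walk.cons hxy.symm p).IsPath := hp.cons hy
    have hlc := tt_path_length_eq_dist hT _ hcons
    rw [SimpleGraph.Walk.length_cons, hlen] at hlc
    omega

/-- Gates are unique in a tree. -/
private lemma tt_gate_unique (hT : T.IsTree) {a b y1 y2 : V} (h1 : T.Adj a y1)
    (h2 : T.Adj a y2) (hd1 : T.dist y1 b + 1 = T.dist a b)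
    (hd2 : T.dist y2 b + 1 = T.dist a b) : y1 = y2 := by
  have hconn := hT.isConnected
  obtain ⟨p1, hp1, hl1⟩ := hconn.exists_path_of_dist y1 b
  obtain ⟨p2, hp2, hl2⟩ := hconn.exists_path_of_dist y2 b
  have ha1 : a ∉ p1.support := by
    intro ha
    have hsp := tt_dist_split hconn p1 hl1 ha
    omega
  have ha2 : a ∉ p2.support := by
    intro ha
    have hsp := tt_dist_split hconn p2 hl2 ha
    omega
  have hP1 : (SimpleGraph.Walk.cons h1 p1).IsPath := hp1.cons ha1
  have hP2 : (SimpleGraph.Walk.cons h2 p2).IsPath := hp2.cons ha2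
  have hEq := hT.IsAcyclic.path_unique ⟨_, hP1⟩ ⟨_, hP2⟩
  have h := congrArg (fun r : T.Path a b => r.1.getVert 1) hEq
  simpa [SimpleGraph.Walk.getVert_cons] using h

/-- If the gates from `a` to `b` and `c` differ, then `a` is between `b` and `c`. -/
private lemma tt_dist_add_of_gates_ne (hT : T.IsTree) (b c : V) :
    ∀ n (a y z : V), T.dist a b = n → a ≠ b → a ≠ c → T.Adj a y → T.Adj a z →
      T.dist y b + 1 = T.dist a b → T.dist z c + 1 = T.dist a c → y ≠ z →
      T.dist b c = T.dist a b + T.dist a c := by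
  intro n
  induction n using Nat.strong_induction_on with
  | _ n IH =>
    intro a y z hn hab hac hay haz hyb hzc hyz
    have hconn := hT.isConnected
    have hyc : T.dist y c = T.dist a c + 1 := by
      rcases le_or_gt (T.dist a c) (T.dist y c) with h | h
      · exact tt_adj_dist_succ hT hay h
      · exfalso
        have h' := tt_adj_dist_succ hT hay.symm (Nat.le_of_lt h)
        exact hyz (tt_gate_unique hT hay haz h'.symm hzc)
    rcases Nat.eq_zero_or_pos (T.dist y b) with h0 | hpos
    · have hyb' : y = b := hconn.dist_eq_zero_iff.mp h0
      subst hyb'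
      omega
    · have hyB : y ≠ b := by
        intro h; rw [h, SimpleGraph.dist_self] at hpos; omega
      have hyC : y ≠ c := by
        intro h; rw [h, SimpleGraph.dist_self] at hyc; omega
      obtain ⟨y', hyy', hy'b⟩ := tt_gate_exists hconn hyB
      have hy'a : y' ≠ a := by
        intro h; subst h; omega
      have hzc' : T.dist a c + 1 = T.dist y c := by omega
      have hrec := IH (T.dist y b) (by omega) y y' a rfl hyB hyC hyy' hay.symm hy'b hzc' hy'a
      omega

/-- A leaf different from `b` and `c` is not between `b` and `c`. -/
private lemma tt_leaf_not_between [Fintype V] [DecidableRel T.Adj] (hT : T.IsTree)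
    {l b c : V} (hdeg : T.degree l = 1) (hlb : l ≠ b) (hlc : l ≠ c) :
    T.dist b c < T.dist l b + T.dist l c := by
  have hconn := hT.isConnected
  have htri : T.dist b c ≤ T.dist l b + T.dist l c := by
    have h := hconn.dist_triangle (u := b) (v := l) (w := c)
    have hc : T.dist b l = T.dist l b := SimpleGraph.dist_comm
    omega
  rcases Nat.lt_or_ge (T.dist b c) (T.dist l b + T.dist l c) with h | h
  · exact h
  · exfalso
    obtain ⟨u1, hu1, hub⟩ := tt_gate_exists hconn hlb
    obtain ⟨u2, hu2, huc⟩ := tt_gate_exists hconn hlc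
    have hne : u1 ≠ u2 := by
      intro h12
      subst h12
      have h3 := hconn.dist_triangle (u := b) (v := u1) (w := c)
      have hcomm : T.dist b u1 = T.dist u1 b := SimpleGraph.dist_comm
      omega
    have hlt : 1 < T.degree l := by
      have : 1 < (T.neighborFinset l).card :=
        Finset.one_lt_card.mpr
          ⟨u1, (SimpleGraph.mem_neighborFinset T l u1).mpr hu1,
           u2, (SimpleGraph.mem_neighborFinset T l u2).mpr hu2, hne⟩
      exact this
    omega

/-- Key lemma, asymmetric version. -/
private lemma tt_key2 [Fintype V] [DecidableRel T.Adj] (hT : T.IsTree)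
    (hl : 3 ≤ (Finset.univ.filter fun v : V => T.degree v = 1).card)
    (a b c : V) (hmax : ∀ x, T.dist x b + T.dist x c ≤ T.dist a b + T.dist a c)
    (hab : a ≠ b) : T.degree a = 1 := by
  classical
  have hconn := hT.isConnected
  by_contra hdeg
  obtain ⟨y, hay, hyb⟩ := tt_gate_exists hconn hab
  have hdegpos : 0 < T.degree a := (T.degree_pos_iff_exists_adj a).mpr ⟨y, hay⟩
  have hdeg2 : 1 < (T.neighborFinset a).card := by
    have : (T.neighborFinset a).card = T.degree a := rfl
    omega
  have bump : ∀ (t g w : V), T.Adj a g → T.dist g t + 1 = T.dist a t → T.Adj a w →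
      w ≠ g → T.dist w t = T.dist a t + 1 := by
    intro t g w hag hgt haw hwg
    rcases le_or_gt (T.dist a t) (T.dist w t) with h | h
    · exact tt_adj_dist_succ hT haw h
    · exfalso
      have h' := tt_adj_dist_succ hT haw.symm (Nat.le_of_lt h)
      exact hwg (tt_gate_unique hT haw hag h'.symm hgt)
  rcases eq_or_ne a c with rfl | hac
  · -- c = a
    obtain ⟨w, hw, hwy⟩ := Finset.exists_mem_ne hdeg2 y
    have haw : T.Adj a w := (SimpleGraph.mem_neighborFinset T a w).mp hw
    have hwb := bump b y w hay hyb haw hwy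
    have hwa : T.dist w a = 1 := by
      have h1 : T.dist w a ≤ 1 := by
        simpa using SimpleGraph.dist_le (SimpleGraph.Walk.cons haw.symm SimpleGraph.Walk.nil)
      have h2 : 0 < T.dist w a := hconn.pos_dist_of_ne haw.ne'
      omega
    have h0 : T.dist a a = 0 := SimpleGraph.dist_self
    have hm := hmax w
    omega
  · obtain ⟨z, haz, hzc⟩ := tt_gate_exists hconn hac
    rcases eq_or_ne y z with rfl | hyz
    · obtain ⟨w, hw, hwy⟩ := Finset.exists_mem_ne hdeg2 y
      have haw : T.Adj a w := (SimpleGraph.mem_neighborFinset T a w).mp hw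
      have hwb := bump b y w hay hyb haw hwy
      have hwc := bump c y w haz hzc haw hwy
      have hm := hmax w
      omega
    · have hbc := tt_dist_add_of_gates_ne hT b c (T.dist a b) a y z rfl hab hac hay haz
        hyb hzc hyz
      have hsub : ¬ (Finset.univ.filter fun v : V => T.degree v = 1) ⊆
          ({b, c} : Finset V) := by
        intro hsub
        have h1 := Finset.card_le_card hsub
        have h2 : ({b, c} : Finset V).card ≤ 2 :=
          (Finset.card_insert_le b {c}).trans (by simp)
        omega
      obtain ⟨l, hls, hlnot⟩ := Finset.not_subset.mp hsub
      simp only [Finset.mem_insert, Finset.mem_singleton, not_or] at hlnot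
      obtain ⟨hlb, hlc⟩ := hlnot
      have hldeg : T.degree l = 1 := (Finset.mem_filter.mp hls).2
      have hlt := tt_leaf_not_between hT hldeg hlb hlc
      have hm := hmax l
      omega

/-- Key lemma: the first vertex of a triple maximizing the distance sum is a leaf. -/
private lemma tt_key [Fintype V] [DecidableRel T.Adj] (hT : T.IsTree)
    (hl : 3 ≤ (Finset.univ.filter fun v : V => T.degree v = 1).card)
    (a b c : V) (hmax : ∀ x, T.dist x b + T.dist x c ≤ T.dist a b + T.dist a c) :
    T.degree a = 1 := by
  rcases eq_or_ne a b with rfl | hab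
  · rcases eq_or_ne a c with rfl | hac
    · exfalso
      have hcard : 3 ≤ Fintype.card V := by
        have h := (Finset.card_filter_le Finset.univ fun v : V => T.degree v = 1)
        rw [Finset.card_univ] at h
        omega
      have : Nontrivial V := Fintype.one_lt_card_iff_nontrivial.mp (by omega)
      obtain ⟨x, hx⟩ := exists_ne a
      have hm := hmax x
      have h0 : T.dist a a = 0 := SimpleGraph.dist_self
      have hxa : T.dist x a = 0 := by omega
      exact hx (hT.isConnected.dist_eq_zero_iff.mp hxa)
    · exact tt_key2 hT hl a c a (fun x => by have := hmax x; omega) hac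
  · exact tt_key2 hT hl a b c hmax hab

end TriTreeAux

/-- The triameter of a graph `G`: the maximum of `d(a,b) + d(a,c) + d(b,c)`
over all triples of vertices `a, b, c`. -/
noncomputable def SimpleGraph.triameter {V : Type*} [Fintype V] (G : SimpleGraph V) : ℕ :=
  Finset.univ.sup fun p : V × V × V =>
    G.dist p.1 p.2.1 + G.dist p.1 p.2.2 + G.dist p.2.1 p.2.2

/-- In a tree with at least `3` leaves, every vertex of a triametral triple is a leaf. -/
theorem triametral_triple_vertices_are_leaves {V : Type*} [Fintype V]
    (T : SimpleGraph V) [DecidableRel T.Adj] (hT : T.IsTree)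
    (hl : 3 ≤ (Finset.univ.filter fun v : V => T.degree v = 1).card)
    (a b c : V) (htri : T.dist a b + T.dist a c + T.dist b c = T.triameter) :
    T.degree a = 1 ∧ T.degree b = 1 ∧ T.degree c = 1 := by
  have hle : ∀ p : V × V × V,
      T.dist p.1 p.2.1 + T.dist p.1 p.2.2 + T.dist p.2.1 p.2.2 ≤ T.triameter := by
    intro p
    unfold SimpleGraph.triameter
    exact Finset.le_sup (f := fun p : V × V × V =>
      T.dist p.1 p.2.1 + T.dist p.1 p.2.2 + T.dist p.2.1 p.2.2) (Finset.mem_univ p)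
  have hab : T.dist a b = T.dist b a := SimpleGraph.dist_comm
  have hac : T.dist a c = T.dist c a := SimpleGraph.dist_comm
  have hbc : T.dist b c = T.dist c b := SimpleGraph.dist_comm
  refine ⟨?_, ?_, ?_⟩
  · exact tt_key hT hl a b c (fun x => by have := hle (x, b, c); dsimp only at this; omega)
  · exact tt_key hT hl b a c (fun x => by have := hle (x, a, c); dsimp only at this; omega)
  · exact tt_key hT hl c a b (fun x => by have := hle (x, a, b); dsimp only at this; omega)
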